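/- Let (f_n) be a sequence of nonnegative functions of bounded variation on a compact interval [a,b], uniformly bounded by M and with total variations uniformly bounded by V. Then there exists a subsequence (f_{n_j}) and a function f of bounded variation on [a,b] such that f_{n_j}(z) → f(z) at every continuity point of f (Helly's selection theorem). -/

import Mathlib

open Filter Set Topology

/-- Extraction lemma: a sequence of functions uniformly bounded on a countable set
admits a subsequence converging pointwise on that set. -/
lemma helly_extract {S : Set ℝ} (hS : S.Countable) (C : ℝ) (G : ℕ → ℝ → ℝ)
    (hG : ∀ n, ∀ z ∈ S, G n z ∈ Set.Icc (-C) C) :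
    ∃ φ : ℕ → ℕ, StrictMono φ ∧ ∃ L : ℝ → ℝ,
      ∀ z ∈ S, Tendsto (fun j => G (φ j) z) atTop (𝓝 (L z)) := by
  classical
  haveI : Countable S := hS.to_subtype
  set X := S → Set.Icc (-C) C with hX
  have hcpt : IsCompact (Set.univ : Set X) := isCompact_univ
  set x : ℕ → X := fun n z => ⟨G n z, hG n z z.2⟩ with hx
  obtain ⟨l, -, φ, hφ, hconv⟩ := hcpt.tendsto_subseq (fun n => Set.mem_univ (x n))
  refine ⟨φ, hφ, fun z => if h : z ∈ S then (l ⟨z, h⟩ : ℝ) else 0, fun z hz => ?_⟩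
  have := (tendsto_pi_nhds.1 hconv) ⟨z, hz⟩
  have := ((continuous_subtype_val).continuousAt).tendsto.comp this
  simpa [dif_pos hz, Function.comp_def] using this

/-- Core Helly step for monotone functions: if `u n` are monotone on `[a,b]` and converge
pointwise on a suitable dense subset `D` to `P`, then they converge at every continuity
point of the monotone envelope of `P`. -/
lemma helly_mono {a b : ℝ} {D : Set ℝ} (hD : D ⊆ Set.Icc a b)
    (haD : a ∈ D) (hbD : b ∈ D)
    (hdense : ∀ z, a ≤ z → z < b → ∀ δ > 0, ∃ q ∈ D, z < q ∧ q < z + δ)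
    (u : ℕ → ℝ → ℝ) (hmono : ∀ n, MonotoneOn (u n) (Set.Icc a b))
    (P : ℝ → ℝ) (hP : ∀ q ∈ D, Tendsto (fun j => u j q) atTop (𝓝 (P q))) :
    ∃ Pb : ℝ → ℝ, Monotone Pb ∧
      ∀ z ∈ Set.Icc a b, (z ∈ D ∨ ContinuousAt Pb z) →
        Tendsto (fun j => u j z) atTop (𝓝 (Pb z)) := by
  have hPmono : ∀ q ∈ D, ∀ r ∈ D, q ≤ r → P q ≤ P r := by
    intro q hq r hr hqr
    exact le_of_tendsto_of_tendsto' (hP q hq) (hP r hr) fun j => hmono j (hD hq) (hD hr) hqr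
  set Pb : ℝ → ℝ := fun z => sSup (P '' (D ∩ Set.Iic (max z a))) with hPb
  have hne : ∀ z : ℝ, (P '' (D ∩ Set.Iic (max z a))).Nonempty := fun z =>
    ⟨P a, mem_image_of_mem _ ⟨haD, mem_Iic.2 (le_max_right _ _)⟩⟩
  have hbdd : ∀ z : ℝ, BddAbove (P '' (D ∩ Set.Iic (max z a))) := by
    intro z
    refine ⟨P b, ?_⟩
    rintro t ⟨q, ⟨hq, -⟩, rfl⟩
    exact hPmono q hq b hbD (hD hq).2
  have hmonoPb : Monotone Pb := by
    intro z w hzw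
    exact csSup_le_csSup (hbdd w) (hne z)
      (image_mono (inter_subset_inter_right _ (Iic_subset_Iic.2 (max_le_max hzw le_rfl))))
  have hPbD : ∀ z ∈ D, Pb z = P z := by
    intro z hz
    have hza : max z a = z := max_eq_left (hD hz).1
    apply le_antisymm
    · apply csSup_le (hne z)
      rintro t ⟨q, ⟨hq, hq2⟩, rfl⟩
      exact hPmono q hq z hz (by simpa [hza] using hq2)
    · exact le_csSup (hbdd z) (mem_image_of_mem _ ⟨hz, by simp [hza]⟩)
  refine ⟨Pb, hmonoPb, fun z hz hcont => ?_⟩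
  by_cases hzD : z ∈ D
  · rw [hPbD z hzD]; exact hP z hzD
  have hcont := hcont.resolve_left hzD
  have hza : max z a = z := max_eq_left hz.1
  have key : ∀ ε > 0, ∀ᶠ j in atTop, dist (u j z) (Pb z) < ε := by
    intro ε hε
    -- lower bound
    obtain ⟨t, ht, hlt⟩ := exists_lt_of_lt_csSup (hne z) (show Pb z - ε/2 < Pb z by linarith)
    obtain ⟨q, ⟨hqD, hqz⟩, rfl⟩ := ht
    rw [hza] at hqz
    have hlow : ∀ᶠ j in atTop, Pb z - ε < u j z := by
      filter_upwards [(hP q hqD).eventually (eventually_gt_nhds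
        (show P q - ε/2 < P q by linarith))] with j hj
      have := hmono j (hD hqD) hz hqz
      linarith
    -- upper bound
    have hzb : z < b := lt_of_le_of_ne hz.2 (fun h => hzD (h ▸ hbD))
    obtain ⟨δ, hδ, hδ2⟩ := Metric.continuousAt_iff.1 hcont (ε/2) (by linarith)
    obtain ⟨r, hrD, hzr, hrδ⟩ := hdense z hz.1 hzb δ hδ
    have hdq : dist r z < δ := by rw [Real.dist_eq, abs_of_pos (by linarith)]; linarith
    have hPbr : Pb r < Pb z + ε/2 := by
      have := hδ2 hdq; rw [Real.dist_eq, abs_lt] at this; linarith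
    have hPr : P r < Pb z + ε/2 := by rw [← hPbD r hrD]; exact hPbr
    have hupp : ∀ᶠ j in atTop, u j z < Pb z + ε := by
      filter_upwards [(hP r hrD).eventually (eventually_lt_nhds
        (show P r < Pb z + ε by linarith))] with j hj
      have := hmono j hz (hD hrD) hzr.le
      linarith
    filter_upwards [hlow, hupp] with j h1 h2
    rw [Real.dist_eq, abs_lt]
    constructor <;> linarith
  rw [Metric.tendsto_atTop]
  intro ε hε
  exact eventually_atTop.1 (key ε hε)

/-- Helly's selection theorem: a uniformly bounded sequence of nonnegative functions with
uniformly bounded variation on `[a,b]` admits a subsequence converging, at every continuity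
point of the limit, to a function of bounded variation. -/
theorem stmt_15 (a b M V : ℝ) (hab : a ≤ b) (hM : 0 ≤ M) (hV : 0 ≤ V)
    (f : ℕ → ℝ → ℝ)
    (hbdd : ∀ n, ∀ z ∈ Set.Icc a b, f n z ∈ Set.Icc (0 : ℝ) M)
    (hvar : ∀ n, eVariationOn (f n) (Set.Icc a b) ≤ ENNReal.ofReal V) :
    ∃ (φ : ℕ → ℕ), StrictMono φ ∧ ∃ g : ℝ → ℝ,
      eVariationOn g (Set.Icc a b) ≤ ENNReal.ofReal V ∧
      ∀ z ∈ Set.Icc a b, ContinuousWithinAt g (Set.Icc a b) z →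
        Filter.Tendsto (fun j => f (φ j) z) Filter.atTop (nhds (g z)) := by
  classical
  have haI : a ∈ Set.Icc a b := ⟨le_rfl, hab⟩
  have hbv : ∀ n, LocallyBoundedVariationOn (f n) (Set.Icc a b) := fun n =>
    BoundedVariationOn.locallyBoundedVariationOn
      (ne_top_of_le_ne_top ENNReal.ofReal_ne_top (hvar n))
  set p : ℕ → ℝ → ℝ := fun n => variationOnFromTo (f n) (Set.Icc a b) a with hp
  have hpmono : ∀ n, MonotoneOn (p n) (Set.Icc a b) := fun n =>
    variationOnFromTo.monotoneOn (hbv n) haI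
  have hqmono : ∀ n, MonotoneOn (fun z => p n z - f n z) (Set.Icc a b) := fun n =>
    variationOnFromTo.sub_self_monotoneOn (hbv n) haI
  have hpbd : ∀ n, ∀ z ∈ Set.Icc a b, p n z ∈ Set.Icc (0 : ℝ) V := by
    intro n z hz
    refine ⟨variationOnFromTo.nonneg_of_le _ _ hz.1, ?_⟩
    show variationOnFromTo (f n) (Set.Icc a b) a z ≤ V
    rw [variationOnFromTo.eq_of_le _ _ hz.1]
    exact ENNReal.toReal_le_of_le_ofReal hV
      (le_trans (eVariationOn.mono _ inter_subset_left) (hvar n))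
  -- countable dense set
  obtain ⟨D₀, hD₀c, hD₀d⟩ := TopologicalSpace.exists_countable_dense ℝ
  set D : Set ℝ := (D₀ ∩ Set.Icc a b) ∪ {a, b} with hDdef
  have hDc : D.Countable := (hD₀c.mono inter_subset_left).union (by simp)
  have hDsub : D ⊆ Set.Icc a b := by
    rintro z (⟨-, hz⟩ | hz)
    · exact hz
    · rcases hz with rfl | rfl
      · exact haI
      · exact ⟨hab, le_rfl⟩
  have haD : a ∈ D := Or.inr (Or.inl rfl)
  have hbD : b ∈ D := Or.inr (Or.inr rfl)
  have hdense : ∀ z, a ≤ z → z < b → ∀ δ > 0, ∃ q ∈ D, z < q ∧ q < z + δ := by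
    intro z hz hzb δ hδ
    have hne : (Set.Ioo z (min b (z + δ))).Nonempty := by
      rw [nonempty_Ioo, lt_min_iff]; exact ⟨hzb, by linarith⟩
    obtain ⟨q, hqD₀, hq⟩ := hD₀d.exists_mem_open isOpen_Ioo hne
    refine ⟨q, Or.inl ⟨hqD₀, ⟨hz.trans hq.1.le, le_of_lt (lt_of_lt_of_le hq.2 (min_le_left _ _))⟩⟩,
      hq.1, lt_of_lt_of_le hq.2 (min_le_right _ _)⟩
  -- first extraction : p on D
  obtain ⟨φ₁, hφ₁, P0, hP0⟩ := helly_extract hDc V p (by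
    intro n z hz
    have := hpbd n z (hDsub hz)
    exact ⟨by linarith [this.1], this.2⟩)
  -- second extraction : p - f on D
  obtain ⟨φ₂, hφ₂, Q0, hQ0⟩ := helly_extract hDc (V + M)
    (fun j z => p (φ₁ j) z - f (φ₁ j) z) (by
    intro j z hz
    have h1 := hpbd (φ₁ j) z (hDsub hz)
    have h2 := hbdd (φ₁ j) z (hDsub hz)
    rw [mem_Icc] at h1 h2
    show p (φ₁ j) z - f (φ₁ j) z ∈ Set.Icc (-(V + M)) (V + M)
    rw [mem_Icc]
    exact ⟨by linarith [h1.1, h2.2], by linarith [h1.2, h2.1]⟩)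
  have hP0' : ∀ q ∈ D, Tendsto (fun j => p (φ₁ (φ₂ j)) q) atTop (𝓝 (P0 q)) := by
    intro q hq
    exact (hP0 q hq).comp hφ₂.tendsto_atTop
  -- monotone envelopes
  obtain ⟨Pb, hPbmono, hPbconv⟩ := helly_mono hDsub haD hbD hdense
    (fun j => p (φ₁ (φ₂ j))) (fun j => hpmono _) P0 hP0'
  obtain ⟨Qb, hQbmono, hQbconv⟩ := helly_mono hDsub haD hbD hdense
    (fun j z => p (φ₁ (φ₂ j)) z - f (φ₁ (φ₂ j)) z) (fun j => hqmono _) Q0 hQ0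
  -- third extraction : f on exceptional set
  set E : Set ℝ := Set.Icc a b ∩ ({z | ¬ContinuousAt Pb z} ∪ {z | ¬ContinuousAt Qb z}) with hEdef
  have hEc : E.Countable := ((hPbmono.countable_not_continuousAt).union
    (hQbmono.countable_not_continuousAt)).mono inter_subset_right
  obtain ⟨φ₃, hφ₃, L, hL⟩ := helly_extract hEc M (fun j => f (φ₁ (φ₂ j))) (by
    intro j z hz
    have := hbdd (φ₁ (φ₂ j)) z hz.1
    exact ⟨by linarith [this.1], this.2⟩)
  refine ⟨φ₁ ∘ φ₂ ∘ φ₃, hφ₁.comp (hφ₂.comp hφ₃), ?_⟩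
  set g : ℝ → ℝ := fun z => if z ∈ E then L z else Pb z - Qb z with hg
  have hconv : ∀ z ∈ Set.Icc a b,
      Tendsto (fun j => f (φ₁ (φ₂ (φ₃ j))) z) atTop (𝓝 (g z)) := by
    intro z hz
    by_cases hzE : z ∈ E
    · rw [hg]; simp only [if_pos hzE]
      exact hL z hzE
    · rw [hg]; simp only [if_neg hzE]
      have hns : z ∉ ({z | ¬ContinuousAt Pb z} ∪ {z | ¬ContinuousAt Qb z}) := fun h => hzE ⟨hz, h⟩
      rw [mem_union, not_or] at hns
      have hcP : ContinuousAt Pb z := not_not.1 hns.1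
      have hcQ : ContinuousAt Qb z := not_not.1 hns.2
      have t1 : Tendsto (fun j => p (φ₁ (φ₂ (φ₃ j))) z) atTop (𝓝 (Pb z)) :=
        (hPbconv z hz (Or.inr hcP)).comp hφ₃.tendsto_atTop
      have t2 : Tendsto (fun j => p (φ₁ (φ₂ (φ₃ j))) z - f (φ₁ (φ₂ (φ₃ j))) z)
          atTop (𝓝 (Qb z)) :=
        (hQbconv z hz (Or.inr hcQ)).comp hφ₃.tendsto_atTop
      have := t1.sub t2
      simpa using this
  refine ⟨g, ?_, fun z hz _ => hconv z hz⟩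
  by_contra h
  rw [not_le] at h
  obtain ⟨j, hj⟩ := (eVariationOn.lowerSemicontinuous_aux
    (fun x hx => hconv x hx) h).exists
  exact absurd (hvar (φ₁ (φ₂ (φ₃ j)))) (not_le.2 hj)
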